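/- Let X be a countably generated measurable space. Then the space of probability measures P(X) with its evaluation σ-algebra is both countably generated and countably separated. In particular, two probability measures on X agreeing on a generating π-system are equal. -/

import Mathlib

open MeasureTheory
open scoped ENNReal NNReal

noncomputable instance probMeasurableSpace {X : Type*} [MeasurableSpace X] :
    MeasurableSpace (ProbabilityMeasure X) :=
  Subtype.instMeasurableSpace

/-- A measurable space is countably separated if some countable family of measurable sets
separates its points. -/
def CountablySeparatedSpace (X : Type*) [MeasurableSpace X] : Prop :=
  ∃ E : Set (Set X), E.Countable ∧ (∀ A ∈ E, MeasurableSet A) ∧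
    ∀ x y : X, x ≠ y → ∃ A ∈ E, Xor' (x ∈ A) (y ∈ A)

/-- The π-system generated by a countable family is countable. -/
lemma countable_generatePiSystemAux {α : Type*} {S : Set (Set α)} (hS : S.Countable) :
    (generatePiSystem S).Countable := by
  have hsub : generatePiSystem S ⊆
      (fun T : Set (Set α) => ⋂₀ T) '' {T | T.Finite ∧ T ⊆ S ∧ T.Nonempty} := by
    intro t ht
    induction ht with
    | base hs =>
      exact ⟨{_}, ⟨Set.finite_singleton _, Set.singleton_subset_iff.2 hs,
        Set.singleton_nonempty _⟩, Set.sInter_singleton _⟩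
    | inter _ _ _ ihs iht =>
      obtain ⟨T₁, ⟨hT₁f, hT₁s, hT₁n⟩, rfl⟩ := ihs
      obtain ⟨T₂, ⟨hT₂f, hT₂s, hT₂n⟩, rfl⟩ := iht
      refine ⟨T₁ ∪ T₂, ⟨hT₁f.union hT₂f, Set.union_subset hT₁s hT₂s,
        hT₁n.mono Set.subset_union_left⟩, ?_⟩
      simp [Set.sInter_union]
  have hbig : {T : Set (Set α) | T.Finite ∧ T ⊆ S ∧ T.Nonempty}.Countable :=
    (Set.countable_setOf_finite_subset hS).mono (by intro T hT; exact ⟨hT.1, hT.2.1⟩)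
  exact (hbig.image _).mono hsub

/-- If `X` is countably generated, then the space of probability measures `P(X)` with its
evaluation σ-algebra is countably generated and countably separated; in particular two
probability measures on `X` agreeing on a generating π-system are equal. -/
theorem stmt8 {X : Type*} [mX : MeasurableSpace X] [MeasurableSpace.CountablyGenerated X] :
    MeasurableSpace.CountablyGenerated (ProbabilityMeasure X) ∧
    CountablySeparatedSpace (ProbabilityMeasure X) ∧
    ∀ E : Set (Set X), mX = MeasurableSpace.generateFrom E → IsPiSystem E →
      ∀ μ ν : Measure X, IsProbabilityMeasure μ → IsProbabilityMeasure ν →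
        (∀ A ∈ E, μ A = ν A) → μ = ν := by
  -- the third statement first
  have hext : ∀ E : Set (Set X), mX = MeasurableSpace.generateFrom E → IsPiSystem E →
      ∀ μ ν : Measure X, IsProbabilityMeasure μ → IsProbabilityMeasure ν →
        (∀ A ∈ E, μ A = ν A) → μ = ν := by
    intro E hgen hpi μ ν hμ hν hagree
    exact ext_of_generate_finite E hgen hpi hagree (by simp [hμ.measure_univ, hν.measure_univ])
  -- the countable π-system generating `mX`
  set S : Set (Set X) :=
    generatePiSystem (MeasurableSpace.countableGeneratingSet X) with hS
  have hScount : S.Countable :=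
    countable_generatePiSystemAux (MeasurableSpace.countable_countableGeneratingSet)
  have hSpi : IsPiSystem S := isPiSystem_generatePiSystem _
  have hSgen : mX = MeasurableSpace.generateFrom S := by
    rw [hS, generateFrom_generatePiSystem_eq,
      MeasurableSpace.generateFrom_countableGeneratingSet]
  have hSmeas : ∀ A ∈ S, MeasurableSet A := fun A hA =>
    generatePiSystem_measurableSet
      (fun s hs => MeasurableSpace.measurableSet_countableGeneratingSet hs) A hA
  -- the candidate countable generating family for `P(X)`
  set G : Set (Set (ProbabilityMeasure X)) :=
    (fun p : Set X × ℚ =>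
      {μ : ProbabilityMeasure X | (μ : Measure X) p.1 < (Real.toNNReal p.2 : ℝ≥0∞)}) ''
      (S ×ˢ (Set.univ : Set ℚ)) with hG
  have hGcount : G.Countable :=
    (hScount.prod (Set.countable_univ)).image _
  -- generators of G belong to the generated σ-algebra
  have hGen : ∀ A ∈ S, ∀ q : ℚ,
      MeasurableSet[MeasurableSpace.generateFrom G] {μ : ProbabilityMeasure X |
        (μ : Measure X) A < (Real.toNNReal q : ℝ≥0∞)} := by
    intro A hA q
    exact MeasurableSpace.measurableSet_generateFrom ⟨⟨A, q⟩, ⟨hA, Set.mem_univ _⟩, rfl⟩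
  -- evaluation at any measurable set is measurable for the generated σ-algebra
  have heval : ∀ ⦃A : Set X⦄, MeasurableSet A →
      Measurable[MeasurableSpace.generateFrom G]
        (fun μ : ProbabilityMeasure X => (μ : Measure X) A) := by
    refine MeasurableSpace.induction_on_inter
      (C := fun A _ => Measurable[MeasurableSpace.generateFrom G]
        (fun μ : ProbabilityMeasure X => (μ : Measure X) A)) hSgen hSpi ?_ ?_ ?_ ?_
    · simp only [measure_empty]
      exact @measurable_const ℝ≥0∞ _ _ (MeasurableSpace.generateFrom G) 0
    · intro t ht
      refine measurable_of_Iio (mδ := MeasurableSpace.generateFrom G) fun x => ?_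
      have hx : (fun μ : ProbabilityMeasure X => (μ : Measure X) t) ⁻¹' Set.Iio x =
          ⋃ q ∈ {q : ℚ | (Real.toNNReal q : ℝ≥0∞) < x},
            {μ : ProbabilityMeasure X | (μ : Measure X) t < (Real.toNNReal q : ℝ≥0∞)} := by
        ext μ
        simp only [Set.mem_preimage, Set.mem_Iio, Set.mem_iUnion, Set.mem_setOf_eq]
        constructor
        · intro h
          obtain ⟨q, _, hq1, hq2⟩ := ENNReal.lt_iff_exists_rat_btwn.1 h
          exact ⟨q, hq2, hq1⟩
        · rintro ⟨q, hq2, hq1⟩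
          exact hq1.trans hq2
      rw [hx]
      exact MeasurableSet.biUnion (Set.to_countable _) fun q _ => hGen t ht q
    · intro t htm iht
      have hc : (fun μ : ProbabilityMeasure X => (μ : Measure X) tᶜ) =
          fun μ : ProbabilityMeasure X => 1 - (μ : Measure X) t := by
        funext μ
        rw [measure_compl htm (measure_ne_top _ _), measure_univ]
      rw [hc]
      exact Measurable.sub (measurable_const) iht
    · intro f hf hfm ihf
      have hu : (fun μ : ProbabilityMeasure X => (μ : Measure X) (⋃ i, f i)) =
          fun μ : ProbabilityMeasure X => ∑' i, (μ : Measure X) (f i) := by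
        funext μ
        exact measure_iUnion hf hfm
      rw [hu]
      exact Measurable.ennreal_tsum ihf
  -- the generated σ-algebra is exactly the σ-algebra on P(X)
  have hle : (probMeasurableSpace : MeasurableSpace (ProbabilityMeasure X)) ≤
      MeasurableSpace.generateFrom G := by
    have hcoe : Measurable[MeasurableSpace.generateFrom G]
        (fun μ : ProbabilityMeasure X => (μ : Measure X)) :=
      @Measure.measurable_of_measurable_coe X (ProbabilityMeasure X) _
        (MeasurableSpace.generateFrom G) _ (fun s hs => heval hs)
    exact measurable_iff_comap_le.1 hcoe
  have hge : MeasurableSpace.generateFrom G ≤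
      (probMeasurableSpace : MeasurableSpace (ProbabilityMeasure X)) := by
    refine MeasurableSpace.generateFrom_le ?_
    rintro t ⟨⟨A, q⟩, ⟨hA, -⟩, rfl⟩
    exact ((Measure.measurable_coe (hSmeas A hA)).comp measurable_subtype_coe)
      measurableSet_Iio
  have hmeq : (probMeasurableSpace : MeasurableSpace (ProbabilityMeasure X)) =
      MeasurableSpace.generateFrom G := le_antisymm hle hge
  refine ⟨⟨⟨G, hGcount, hmeq⟩⟩, ?_, hext⟩
  -- countable separation
  refine ⟨G, hGcount, ?_, ?_⟩
  · intro A hAG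
    have h1 : MeasurableSet[MeasurableSpace.generateFrom G] A :=
      MeasurableSpace.measurableSet_generateFrom hAG
    rwa [hmeq]
  · intro μ ν hne
    have hms : (μ : Measure X) ≠ (ν : Measure X) := fun h => hne (Subtype.ext h)
    have hdiff : ∃ A ∈ S, (μ : Measure X) A ≠ (ν : Measure X) A := by
      by_contra h
      push_neg at h
      exact hms (hext S hSgen hSpi _ _ μ.2 ν.2 h)
    obtain ⟨A, hAS, hAne⟩ := hdiff
    rcases lt_or_gt_of_ne hAne with hlt | hlt
    · obtain ⟨q, _, hq1, hq2⟩ := ENNReal.lt_iff_exists_rat_btwn.1 hlt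
      refine ⟨_, ⟨⟨A, q⟩, ⟨hAS, Set.mem_univ _⟩, rfl⟩, Or.inl ⟨hq1, ?_⟩⟩
      simpa using hq2.le
    · obtain ⟨q, _, hq1, hq2⟩ := ENNReal.lt_iff_exists_rat_btwn.1 hlt
      refine ⟨_, ⟨⟨A, q⟩, ⟨hAS, Set.mem_univ _⟩, rfl⟩, Or.inr ⟨hq1, ?_⟩⟩
      simpa using hq2.le
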